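/- Let τᵢ > 0 and M ≥ 0 with Mτᵢ < 1 for each coordinate i, and suppose F : ℝ^d × ℝ^m → [0, M]^d is continuous. For the LTC system xᵢ' = -(1/τᵢ + Fᵢ(x, I(t)))·xᵢ + Aᵢ·Fᵢ(x, I(t)) with continuous input I, every solution satisfies min(0, Aᵢ) ≤ xᵢ(t) ≤ max(0, Aᵢ) for all t ≥ 0 whenever the initial state lies in that box. -/

import Mathlib

/-- If `g` is differentiable on `[0, ∞)`, its derivative is nonpositive wherever
`g > 0`, and `g 0 ≤ 0`, then `g ≤ 0` on `[0, ∞)`. -/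
lemma key_nonpos (g g' : ℝ → ℝ)
    (hd : ∀ t, 0 ≤ t → HasDerivAt g (g' t) t)
    (hneg : ∀ t, 0 ≤ t → 0 < g t → g' t ≤ 0)
    (h0 : g 0 ≤ 0) : ∀ t, 0 ≤ t → g t ≤ 0 := by
  intro t ht
  by_contra hgt
  push_neg at hgt
  set S : Set ℝ := Set.Icc 0 t ∩ g ⁻¹' Set.Iic 0 with hSdef
  have hgc : ContinuousOn g (Set.Icc 0 t) := fun s hs =>
    ((hd s hs.1).continuousAt).continuousWithinAt
  have hSclosed : IsClosed S :=
    hgc.preimage_isClosed_of_isClosed isClosed_Icc isClosed_Iic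
  have hS0 : (0 : ℝ) ∈ S := ⟨⟨le_refl 0, ht⟩, h0⟩
  have hScpt : IsCompact S := isCompact_Icc.of_isClosed_subset hSclosed Set.inter_subset_left
  have hSne : S.Nonempty := ⟨0, hS0⟩
  obtain ⟨t₁, ht₁S, ht₁max⟩ := hScpt.exists_isGreatest hSne
  have ht₁0 : 0 ≤ t₁ := ht₁S.1.1
  have ht₁t : t₁ ≤ t := ht₁S.1.2
  have hgt₁ : g t₁ ≤ 0 := ht₁S.2
  -- on (t₁, t], g is positive
  have hpos : ∀ s, t₁ < s → s ≤ t → 0 < g s := by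
    intro s hs hst
    by_contra hle
    push_neg at hle
    have : s ∈ S := ⟨⟨le_trans ht₁0 hs.le, hst⟩, hle⟩
    exact absurd (ht₁max this) (not_le.mpr hs)
  have ht₁lt : t₁ < t := lt_of_le_of_ne ht₁t (by
    rintro rfl; exact absurd hgt₁ (not_le.mpr hgt))
  -- g is antitone on [t₁, t]
  have hanti : AntitoneOn g (Set.Icc t₁ t) := by
    apply antitoneOn_of_deriv_nonpos (convex_Icc t₁ t)
    · exact fun s hs => ((hd s (le_trans ht₁0 hs.1)).continuousAt).continuousWithinAt
    · intro s hs
      rw [interior_Icc] at hs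
      exact ((hd s (le_trans ht₁0 hs.1.le)).differentiableAt).differentiableWithinAt
    · intro s hs
      rw [interior_Icc] at hs
      have hs0 : 0 ≤ s := le_trans ht₁0 hs.1.le
      rw [(hd s hs0).deriv]
      exact hneg s hs0 (hpos s hs.1 hs.2.le)
  have : g t ≤ g t₁ :=
    hanti ⟨le_refl t₁, ht₁t⟩ ⟨ht₁t, le_refl t⟩ ht₁t
  linarith

/-- Forward invariance of the box `∏ᵢ [min 0 Aᵢ, max 0 Aᵢ]` for a vector LTC
network with continuous input and activation taking values in `[0, M]`. -/
theorem stmt_10 (d m : ℕ) (τ : Fin d → ℝ) (hτ : ∀ i, 0 < τ i)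
    (M : ℝ) (hM : 0 ≤ M) (hMτ : ∀ i, M * τ i < 1) (A : Fin d → ℝ)
    (F : (Fin d → ℝ) → (Fin m → ℝ) → Fin d → ℝ)
    (hFc : Continuous fun p : (Fin d → ℝ) × (Fin m → ℝ) => F p.1 p.2)
    (hFb : ∀ x I i, F x I i ∈ Set.Icc (0 : ℝ) M)
    (I : ℝ → Fin m → ℝ) (hI : Continuous I)
    (x : ℝ → Fin d → ℝ)
    (hx : ∀ t, 0 ≤ t → ∀ i,
      HasDerivAt (fun s => x s i)
        (-(1 / τ i + F (x t) (I t) i) * x t i + A i * F (x t) (I t) i) t)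
    (hinit : ∀ i, x 0 i ∈ Set.Icc (min 0 (A i)) (max 0 (A i))) :
    ∀ t, 0 ≤ t → ∀ i, x t i ∈ Set.Icc (min 0 (A i)) (max 0 (A i)) := by
  intro t ht i
  have hτi : 0 < τ i := hτ i
  have hτinv : 0 < 1 / τ i := by positivity
  set B := max 0 (A i) with hB
  set b := min 0 (A i) with hb
  have hB0 : 0 ≤ B := le_max_left _ _
  have hBA : A i ≤ B := le_max_right _ _
  have hb0 : b ≤ 0 := min_le_left _ _
  have hbA : b ≤ A i := min_le_right _ _
  constructor
  · -- lower bound: g s = b - x s i ≤ 0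
    have := key_nonpos (fun s => b - x s i)
      (fun s => -(-(1 / τ i + F (x s) (I s) i) * x s i + A i * F (x s) (I s) i))
      (fun s hs => ((hx s hs i).const_sub b))
      (fun s hs hpos => by
        have hf := hFb (x s) (I s) i
        have hxs : x s i < b := by linarith
        nlinarith [hf.1, mul_nonneg hf.1 (sub_nonneg.mpr (le_of_lt (lt_of_lt_of_le hxs hbA))),
          mul_pos hτinv (show 0 < b - x s i by linarith)])
      (by simp only [hb, sub_nonpos]; exact (hinit i).1)
      t ht
    simpa using this
  · -- upper bound: g s = x s i - B ≤ 0
    have := key_nonpos (fun s => x s i - B)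
      (fun s => -(1 / τ i + F (x s) (I s) i) * x s i + A i * F (x s) (I s) i)
      (fun s hs => ((hx s hs i).sub_const B))
      (fun s hs hpos => by
        have hf := hFb (x s) (I s) i
        have hxs : B < x s i := by linarith
        nlinarith [hf.1, mul_nonneg hf.1 (sub_nonneg.mpr (le_of_lt (lt_of_le_of_lt hBA hxs))),
          mul_pos hτinv (show 0 < x s i - B by linarith)])
      (by simp only [hB, sub_nonpos]; exact (hinit i).2)
      t ht
    simpa using this
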